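/- arXiv:2011.05610 — 2 statements merged into one kernel-verified Lean document; each statement's English description precedes it below -/
import Mathlib

section
/- Correctness of occurrence listing via φ and PLCP: a text position p' is the start of an occurrence of P[i..j] in T if and only if, starting from any one occurrence start p with T[p..p+j−i] = P[i..j] and repeatedly applying φ (or φ⁻¹), all positions visited while PLCP (respectively LCP at the successor rank) remains ≥ j−i+1 are exactly the occurrence starts; formally, the set {SA[k] : lcp of T[SA[k]..] with P[i..j] has length ≥ j−i+1} is an interval of ranks [l, r] in the suffix array, and Algorithm 1 outputs exactly {SA[k] : l ≤ k ≤ r}. -/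
/-- `lce T a b` = length of the longest common prefix of the suffixes
`T[a..]` and `T[b..]`. -/
noncomputable def lce {α : Type*} (T : List α) (a b : ℕ) : ℕ :=
  letI := Classical.decPred (fun ℓ : ℕ => (T.drop a).take ℓ = (T.drop b).take ℓ)
  Nat.findGreatest (fun ℓ : ℕ => (T.drop a).take ℓ = (T.drop b).take ℓ) T.length

/-- The LCP array (`lcpArr T SA 0 = 0`). -/
noncomputable def lcpArr {α : Type*} (T : List α) (SA : ℕ → ℕ) (k : ℕ) : ℕ :=
  if k = 0 then 0 else lce T (SA (k - 1)) (SA k)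

/-- The permuted LCP array: `PLCP[p] = LCP[ISA[p]]`. -/
noncomputable def plcp {α : Type*} (T : List α) (SA ISA : ℕ → ℕ) (p : ℕ) : ℕ :=
  lcpArr T SA (ISA p)

/-- `φ(p) = SA[ISA[p] - 1]`. -/
def phi (SA ISA : ℕ → ℕ) (p : ℕ) : ℕ := SA (ISA p - 1)

/-- `φ⁻¹(p) = SA[ISA[p] + 1]`, with the out-of-range value `n = |T|`
playing the role of `NULL`. -/
def phiInv {α : Type*} (T : List α) (SA ISA : ℕ → ℕ) (p : ℕ) : ℕ :=
  if ISA p + 1 < T.length then SA (ISA p + 1) else T.length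

lemma lex_irrefl' {α : Type*} [LinearOrder α] : ∀ (l : List α), ¬ List.Lex (· < ·) l l := by
  intro l
  induction l with
  | nil => intro h; cases h
  | cons x xs ih =>
    intro h
    cases h with
    | cons h => exact ih h
    | rel h => exact lt_irrefl _ h

lemma lex_sandwich' {α : Type*} [LinearOrder α] :
    ∀ (m : ℕ) (a b c : List α), List.Lex (· < ·) a b → List.Lex (· < ·) b c →
      a.take m = c.take m → b.take m = a.take m := by
  intro m
  induction m with
  | zero => simp
  | succ m ih =>
    intro a b c hab hbc hac
    cases a with
    | nil =>
      cases c with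
      | nil => cases hbc
      | cons z c' => simp at hac
    | cons x a' =>
      cases c with
      | nil => simp at hac
      | cons z c' =>
        simp only [List.take_succ_cons, List.cons.injEq] at hac
        obtain ⟨hxz, hac'⟩ := hac
        subst hxz
        cases b with
        | nil => cases hab
        | cons y b' =>
          cases hab with
          | rel h1 =>
            cases hbc with
            | rel h2 => exact absurd (h1.trans h2) (lt_irrefl _)
            | cons h2 => exact absurd h1 (lt_irrefl _)
          | cons h1 =>
            cases hbc with
            | rel h2 => exact absurd h2 (lt_irrefl _)
            | cons h2 =>
              simp only [List.take_succ_cons, List.cons.injEq]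
              exact ⟨trivial, ih a' b' c' h1 h2 hac'⟩

lemma lce_ge_of_take_eq' {α : Type*} (T : List α) (a b m : ℕ) (hm : m ≤ T.length)
    (h : (T.drop a).take m = (T.drop b).take m) : m ≤ lce T a b := by
  classical
  unfold lce
  convert Nat.le_findGreatest (P := fun ℓ : ℕ => (T.drop a).take ℓ = (T.drop b).take ℓ)
    (m := m) (n := T.length) hm h using 2

lemma take_eq_of_lce_ge' {α : Type*} (T : List α) (a b m : ℕ)
    (h : m ≤ lce T a b) : (T.drop a).take m = (T.drop b).take m := by
  classical
  have hspec : (T.drop a).take (lce T a b) = (T.drop b).take (lce T a b) := by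
    unfold lce
    have := Nat.findGreatest_spec (P := fun ℓ : ℕ => (T.drop a).take ℓ = (T.drop b).take ℓ)
      (m := 0) (n := T.length) (Nat.zero_le _) rfl
    convert this using 3
  have h1 : (T.drop a).take m = ((T.drop a).take (lce T a b)).take m := by
    rw [List.take_take, min_eq_left h]
  rw [h1, hspec, List.take_take, min_eq_left h]

/-- correctness of occurrence listing via `φ`, `φ⁻¹` and
`PLCP`, i.e. of Algorithm 1: given one occurrence start `p` of `P[i..j]` in
`T`, the ranks of the suffixes having `P[i..j]` as a prefix form a contiguous
interval `[l, r]` of the suffix array, and the set of positions output by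
Algorithm 1 — `p` and its `φ`-iterates taken while `PLCP ≥ j-i+1`, together
with the `φ⁻¹`-iterates taken while they are non-`NULL` and `PLCP ≥ j-i+1` —
is exactly `{SA[k] : l ≤ k ≤ r}`, the set of all occurrence starts. -/
theorem algorithm1_lists_all_occurrences {α : Type*} [LinearOrder α]
    (T P : List α) (SA ISA : ℕ → ℕ)
    (hn : 0 < T.length)
    (hSA : ∀ k, k < T.length → SA k < T.length)
    (hsorted : ∀ k l, k < l → l < T.length →
      List.Lex (· < ·) (T.drop (SA k)) (T.drop (SA l)))
    (hISA : ∀ q, q < T.length → ISA q < T.length ∧ SA (ISA q) = q)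
    (i j p : ℕ) (hij : i ≤ j) (hjP : j < P.length)
    (hp : p < T.length)
    (hocc : (T.drop p).take (j - i + 1) = (P.drop i).take (j - i + 1)) :
    ∃ l r : ℕ,
      (∀ k, k < T.length →
        (((T.drop (SA k)).take (j - i + 1) = (P.drop i).take (j - i + 1)) ↔
          (l ≤ k ∧ k ≤ r))) ∧
      {x : ℕ |
          (∃ t : ℕ, x = (phi SA ISA)^[t] p ∧
            ∀ u, u < t → j - i + 1 ≤ plcp T SA ISA ((phi SA ISA)^[u] p)) ∨
          (∃ t : ℕ, 1 ≤ t ∧ x = (phiInv T SA ISA)^[t] p ∧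
            ∀ u, 1 ≤ u → u ≤ t →
              (phiInv T SA ISA)^[u] p ≠ T.length ∧
                j - i + 1 ≤ plcp T SA ISA ((phiInv T SA ISA)^[u] p))} =
        {x : ℕ | ∃ k, l ≤ k ∧ k ≤ r ∧ x = SA k} := by
  classical
  set m := j - i + 1 with hmdef
  have hm1 : 1 ≤ m := by omega
  -- length facts
  have hQlen : ((P.drop i).take m).length = m := by
    simp only [List.length_take, List.length_drop]
    omega
  have hpm : m ≤ T.length - p := by
    have := congrArg List.length hocc
    simp only [List.length_take, List.length_drop] at this
    omega
  have hmn : m ≤ T.length := by omega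
  -- SA injectivity and ISA ∘ SA = id
  have hSAinj : ∀ k k', k < T.length → k' < T.length → SA k = SA k' → k = k' := by
    intro k k' hk hk' he
    by_contra hne
    rcases lt_or_gt_of_ne hne with h | h
    · exact lex_irrefl' _ (he ▸ hsorted k k' h hk')
    · exact lex_irrefl' _ (he ▸ hsorted k' k h hk)
  have hISAinv : ∀ k, k < T.length → ISA (SA k) = k := by
    intro k hk
    exact hSAinj _ _ (hISA (SA k) (hSA k hk)).1 hk (hISA (SA k) (hSA k hk)).2
  obtain ⟨hk₀n, hSAk₀⟩ := hISA p hp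
  set k₀ := ISA p with hk₀def
  -- the set of ranks whose suffix has the pattern as prefix
  set S : Finset ℕ := (Finset.range T.length).filter
    (fun k => (T.drop (SA k)).take m = (P.drop i).take m) with hSdef
  have hmemS : ∀ k, k ∈ S ↔ (k < T.length ∧
      (T.drop (SA k)).take m = (P.drop i).take m) := by
    intro k
    simp [hSdef, Finset.mem_filter, Finset.mem_range]
  have hk₀S : k₀ ∈ S := (hmemS k₀).2 ⟨hk₀n, by rw [hSAk₀]; exact hocc⟩
  have hS : S.Nonempty := ⟨k₀, hk₀S⟩
  set l := S.min' hS with hldef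
  set r := S.max' hS with hrdef
  have hlS : l ∈ S := S.min'_mem hS
  have hrS : r ∈ S := S.max'_mem hS
  have hrn : r < T.length := ((hmemS r).1 hrS).1
  have hlk₀ : l ≤ k₀ := S.min'_le k₀ hk₀S
  have hk₀r : k₀ ≤ r := S.le_max' k₀ hk₀S
  have hStake : ∀ k, k ∈ S → (T.drop (SA k)).take m = (P.drop i).take m :=
    fun k hk => ((hmemS k).1 hk).2
  -- interval property
  have hmemI : ∀ k, l ≤ k → k ≤ r → k ∈ S := by
    intro k hlk hkr
    have hkn : k < T.length := lt_of_le_of_lt hkr hrn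
    rcases eq_or_lt_of_le hlk with h | h
    · exact h ▸ hlS
    rcases eq_or_lt_of_le hkr with h' | h'
    · exact h' ▸ hrS
    have h1 := hsorted l k h hkn
    have h2 := hsorted k r h' hrn
    have h3 : (T.drop (SA l)).take m = (T.drop (SA r)).take m :=
      (hStake l hlS).trans (hStake r hrS).symm
    have h4 := lex_sandwich' m _ _ _ h1 h2 h3
    exact (hmemS k).2 ⟨hkn, h4.trans (hStake l hlS)⟩
  -- plcp facts
  have hplcp_mem : ∀ k, l < k → k ≤ r → m ≤ plcp T SA ISA (SA k) := by
    intro k hlk hkr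
    have hkn : k < T.length := lt_of_le_of_lt hkr hrn
    have hkS := hmemI k (le_of_lt hlk) hkr
    have hk1S := hmemI (k - 1) (by omega) (by omega)
    have heq : (T.drop (SA (k-1))).take m = (T.drop (SA k)).take m :=
      (hStake _ hk1S).trans (hStake _ hkS).symm
    have := lce_ge_of_take_eq' T (SA (k-1)) (SA k) m hmn heq
    unfold plcp
    rw [hISAinv k hkn]
    unfold lcpArr
    rw [if_neg (by omega : k ≠ 0)]
    exact this
  have hplcp_l : ¬ (m ≤ plcp T SA ISA (SA l)) := by
    have hln : l < T.length := ((hmemS l).1 hlS).1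
    unfold plcp
    rw [hISAinv l hln]
    unfold lcpArr
    by_cases h0 : l = 0
    · rw [if_pos h0]; omega
    · rw [if_neg h0]
      intro hle
      have heq := take_eq_of_lce_ge' T (SA (l-1)) (SA l) m hle
      have : l - 1 ∈ S := (hmemS _).2 ⟨by omega, heq.trans (hStake l hlS)⟩
      have := S.min'_le _ this
      omega
  -- iterate computations
  have hphi_iter : ∀ t, (phi SA ISA)^[t] p = SA (k₀ - t) := by
    intro t
    induction t with
    | zero => simpa using hSAk₀.symm
    | succ t ih =>
      have hlt : k₀ - t < T.length := lt_of_le_of_lt (Nat.sub_le _ _) hk₀n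
      have he : k₀ - (t + 1) = k₀ - t - 1 := by omega
      rw [Function.iterate_succ_apply', ih, he]
      unfold phi
      rw [hISAinv _ hlt]
  have hphiInv_iter : ∀ t, k₀ + t < T.length →
      (phiInv T SA ISA)^[t] p = SA (k₀ + t) := by
    intro t
    induction t with
    | zero => intro _; simpa using hSAk₀.symm
    | succ t ih =>
      intro ht
      have he : k₀ + (t + 1) = k₀ + t + 1 := by omega
      rw [he, Function.iterate_succ_apply', ih (by omega)]
      unfold phiInv
      rw [hISAinv _ (by omega)]
      rw [if_pos (by omega)]
  refine ⟨l, r, ?_, ?_⟩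
  · intro k hk
    constructor
    · intro h
      have hkS : k ∈ S := (hmemS k).2 ⟨hk, h⟩
      exact ⟨S.min'_le k hkS, S.le_max' k hkS⟩
    · intro ⟨h1, h2⟩
      exact hStake k (hmemI k h1 h2)
  · ext x
    simp only [Set.mem_setOf_eq]
    constructor
    · rintro (⟨t, rfl, hcond⟩ | ⟨t, ht1, rfl, hcond⟩)
      · -- phi branch
        have hla : l ≤ k₀ - t := by
          by_contra h
          push_neg at h
          have hu : k₀ - l < t := by omega
          have hc := hcond (k₀ - l) hu
          rw [hphi_iter] at hc
          have heq : k₀ - (k₀ - l) = l := by omega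
          rw [heq] at hc
          exact hplcp_l hc
        exact ⟨k₀ - t, hla, le_trans (Nat.sub_le _ _) hk₀r, (hphi_iter t)⟩
      · -- phiInv branch
        have key : ∀ u, u ≤ t →
            (phiInv T SA ISA)^[u] p = SA (k₀ + u) ∧ k₀ + u ≤ r := by
          intro u
          induction u with
          | zero => intro _; exact ⟨by simpa using hSAk₀.symm, hk₀r⟩
          | succ u ih =>
            intro hut
            obtain ⟨hprev, hur⟩ := ih (by omega)
            obtain ⟨hcne, hcplcp⟩ := hcond (u + 1) (by omega) hut
            have hlt : k₀ + u < T.length := lt_of_le_of_lt hur hrn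
            have hstep : (phiInv T SA ISA)^[u+1] p
                = phiInv T SA ISA (SA (k₀ + u)) := by
              rw [Function.iterate_succ_apply', hprev]
            by_cases hc : k₀ + u + 1 < T.length
            · have hval : phiInv T SA ISA (SA (k₀ + u)) = SA (k₀ + u + 1) := by
                unfold phiInv
                rw [hISAinv _ hlt, if_pos hc]
              have hiter : (phiInv T SA ISA)^[u+1] p = SA (k₀ + u + 1) :=
                hstep.trans hval
              rw [hiter] at hcplcp
              -- deduce k₀ + u + 1 ∈ S
              have hplcp' : m ≤ lce T (SA (k₀ + u)) (SA (k₀ + u + 1)) := by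
                unfold plcp at hcplcp
                rw [hISAinv _ hc] at hcplcp
                unfold lcpArr at hcplcp
                rw [if_neg (by omega : k₀ + u + 1 ≠ 0)] at hcplcp
                simpa using hcplcp
              have heq := take_eq_of_lce_ge' T (SA (k₀ + u)) (SA (k₀ + u + 1)) m hplcp'
              have hprevS : k₀ + u ∈ S := hmemI _ (by omega) hur
              have : k₀ + u + 1 ∈ S :=
                (hmemS _).2 ⟨hc, heq.symm.trans (hStake _ hprevS)⟩
              refine ⟨?_, S.le_max' _ this⟩
              have he2 : k₀ + (u + 1) = k₀ + u + 1 := by omega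
              rw [he2]
              exact hiter
            · exfalso
              have : phiInv T SA ISA (SA (k₀ + u)) = T.length := by
                unfold phiInv
                rw [hISAinv _ hlt, if_neg hc]
              exact hcne (hstep.trans this)
        obtain ⟨hiter, hle⟩ := key t le_rfl
        exact ⟨k₀ + t, by omega, hle, hiter⟩
    · rintro ⟨k, hlk, hkr, rfl⟩
      rcases le_or_gt k k₀ with h | h
      · left
        refine ⟨k₀ - k, ?_, ?_⟩
        · rw [hphi_iter]
          congr 1
          omega
        · intro u hu
          rw [hphi_iter]
          exact hplcp_mem (k₀ - u) (by omega) (by omega)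
      · right
        refine ⟨k - k₀, by omega, ?_, ?_⟩
        · rw [hphiInv_iter (k - k₀) (by omega)]
          congr 1
          omega
        · intro u hu1 hut
          have hun : k₀ + u < T.length := by omega
          rw [hphiInv_iter u hun]
          refine ⟨Nat.ne_of_lt (hSA _ hun), ?_⟩
          exact hplcp_mem (k₀ + u) (by omega) (by omega)
end

section
/- Backward search step correctness: if [l, r] is the suffix-array interval of a string W, then the suffix-array interval of cW equals [C[c] + rank_c(BWT, l−1), C[c] + rank_c(BWT, r) − 1], where rank_c(BWT, i) counts occurrences of c in BWT[0..i]. -/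
/-- The Burrows-Wheeler transform: `bwt T SA i = T[SA[i] - 1]` (circularly). -/
def bwt {α : Type*} [Inhabited α] (T : List α) (SA : ℕ → ℕ) (i : ℕ) : α :=
  T[(SA i + T.length - 1) % T.length]!

/-- `cnt T c` = number of characters of `T` strictly smaller than `c`. -/
def cnt {α : Type*} [LinearOrder α] [Inhabited α] (T : List α) (c : α) : ℕ :=
  ((Finset.range T.length).filter (fun j => T[j]! < c)).card

/-- `rankBWT T SA c i` = number of occurrences of `c` in `BWT[0..i-1]`,
i.e. `rank_c(BWT, i - 1)` in the inclusive convention of the paper. -/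
def rankBWT {α : Type*} [LinearOrder α] [Inhabited α]
    (T : List α) (SA : ℕ → ℕ) (c : α) (i : ℕ) : ℕ :=
  ((Finset.range i).filter (fun j => bwt T SA j = c)).card

private lemma drop_cons' {α : Type*} [Inhabited α] (T : List α) {p : ℕ} (hp : p < T.length) :
    T.drop p = T[p]! :: T.drop (p + 1) := by
  rw [List.drop_eq_getElem_cons hp, getElem!_pos T p hp]

private lemma lex_cons_iff' {α : Type*} [LinearOrder α] {a b : α} {l1 l2 : List α} :
    List.Lex (· < ·) (a :: l1) (b :: l2) ↔ a < b ∨ (a = b ∧ List.Lex (· < ·) l1 l2) := by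
  constructor
  · intro h
    cases h with
    | cons h => exact Or.inr ⟨rfl, h⟩
    | rel h => exact Or.inl h
  · rintro (h | ⟨rfl, h⟩)
    · exact List.Lex.rel h
    · exact List.Lex.cons h

private lemma count_step (p : ℕ → Prop) [DecidablePred p] (j : ℕ) (hj : p j) :
    ((Finset.range (j + 1)).filter p).card = ((Finset.range j).filter p).card + 1 := by
  rw [Finset.range_add_one, Finset.filter_insert, if_pos hj,
    Finset.card_insert_of_notMem (by simp)]

private lemma count_mono (p : ℕ → Prop) [DecidablePred p] {a b : ℕ} (h : a ≤ b) :
    ((Finset.range a).filter p).card ≤ ((Finset.range b).filter p).card :=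
  Finset.card_le_card (Finset.filter_subset_filter _ (Finset.range_subset_range.2 h))

private lemma count_exists (p : ℕ → Prop) [DecidablePred p] :
    ∀ b m, m < ((Finset.range b).filter p).card →
      ∃ j, j < b ∧ p j ∧ ((Finset.range j).filter p).card = m := by
  intro b
  induction b with
  | zero => simp
  | succ b ih =>
    intro m hm
    by_cases h : m < ((Finset.range b).filter p).card
    · obtain ⟨j, h1, h2, h3⟩ := ih m h
      exact ⟨j, Nat.lt_succ_of_lt h1, h2, h3⟩
    · push_neg at h
      by_cases hp : p b
      · refine ⟨b, Nat.lt_succ_self b, hp, ?_⟩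
        rw [count_step p b hp] at hm
        omega
      · rw [Finset.range_add_one, Finset.filter_insert, if_neg hp] at hm
        omega

/-- backward search step: if `[l, r]` is the suffix-array
interval of a string `W`, then the suffix-array interval of `c·W` is
`[C[c] + rank_c(BWT, l-1), C[c] + rank_c(BWT, r) - 1]` (here
`rankBWT T SA c l = rank_c(BWT, l-1)` and `rankBWT T SA c (r+1) =
rank_c(BWT, r)`, with ranks counting occurrences inclusively). -/
theorem backward_search_step {α : Type*} [LinearOrder α] [Inhabited α]
    (T : List α) (SA : ℕ → ℕ) (W : List α) (c : α) (l r : ℕ)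
    (hn : 0 < T.length)
    (hSA : ∀ k, k < T.length → SA k < T.length)
    (hsorted : ∀ k l', k < l' → l' < T.length →
      List.Lex (· < ·) (T.drop (SA k)) (T.drop (SA l')))
    (hsent : ∀ k, k < T.length - 1 → T[T.length - 1]! < T[k]!)
    (hc : T[T.length - 1]! < c)
    (hr : r < T.length)
    (hW : ∀ k, k < T.length → ((W <+: T.drop (SA k)) ↔ (l ≤ k ∧ k ≤ r))) :
    ∀ k, k < T.length →
      (((c :: W) <+: T.drop (SA k)) ↔
        (cnt T c + rankBWT T SA c l ≤ k ∧
          k ≤ cnt T c + rankBWT T SA c (r + 1) - 1)) := by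
  classical
  -- injectivity of SA on ranks
  have hirr : ∀ s : List α, ¬ List.Lex (· < ·) s s := fun s => irrefl_of _ s
  have hinj : ∀ k1 k2, k1 < T.length → k2 < T.length → SA k1 = SA k2 → k1 = k2 := by
    intro k1 k2 h1 h2 he
    by_contra hne
    rcases Nat.lt_or_ge k1 k2 with h | h
    · have := hsorted k1 k2 h h2
      rw [he] at this
      exact hirr _ this
    · have hlt : k2 < k1 := by omega
      have := hsorted k2 k1 hlt h1
      rw [he] at this
      exact hirr _ this
  -- order characterization
  have hord : ∀ k1 k2, k1 < T.length → k2 < T.length →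
      (List.Lex (· < ·) (T.drop (SA k1)) (T.drop (SA k2)) ↔ k1 < k2) := by
    intro k1 k2 h1 h2
    constructor
    · intro hl
      by_contra hge
      push_neg at hge
      rcases Nat.lt_or_ge k2 k1 with h | h
      · exact asymm hl (hsorted k2 k1 h h1)
      · have : k1 = k2 := le_antisymm h hge
        subst this
        exact hirr _ hl
    · intro h
      exact hsorted k1 k2 h h2
  -- surjectivity of SA onto positions
  have himg : Finset.image SA (Finset.range T.length) = Finset.range T.length := by
    apply Finset.eq_of_subset_of_card_le
    · intro p hp
      obtain ⟨k, hk, rfl⟩ := Finset.mem_image.1 hp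
      exact Finset.mem_range.2 (hSA k (Finset.mem_range.1 hk))
    · rw [Finset.card_image_of_injOn (fun a ha b hb h =>
        hinj a b (Finset.mem_range.1 ha) (Finset.mem_range.1 hb) h)]
  have hsurj : ∀ p, ∃ k, p < T.length → (k < T.length ∧ SA k = p) := by
    intro p
    by_cases hp : p < T.length
    · have hmem : p ∈ Finset.image SA (Finset.range T.length) := by
        rw [himg]; exact Finset.mem_range.2 hp
      obtain ⟨k, hk, he⟩ := Finset.mem_image.1 hmem
      exact ⟨k, fun _ => ⟨Finset.mem_range.1 hk, he⟩⟩
    · exact ⟨0, fun h => absurd h hp⟩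
  choose σ hσ using hsurj
  -- bwt values
  have hbwt_pos : ∀ j, j < T.length → 1 ≤ SA j → bwt T SA j = T[SA j - 1]! := by
    intro j hj h1
    have h2 := hSA j hj
    unfold bwt
    congr 1
    have he : SA j + T.length - 1 = (SA j - 1) + T.length := by omega
    rw [he, Nat.add_mod_right, Nat.mod_eq_of_lt (by omega)]
  have hbwt_zero : ∀ j, SA j = 0 → bwt T SA j = T[T.length - 1]! := by
    intro j h0
    unfold bwt
    rw [h0]
    congr 1
    rw [Nat.zero_add, Nat.mod_eq_of_lt (by omega)]
  have hpos : ∀ j, j < T.length → bwt T SA j = c → 1 ≤ SA j ∧ T[SA j - 1]! = c := by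
    intro j hj hb
    have h1 : 1 ≤ SA j := by
      by_contra h
      have h0 : SA j = 0 := by omega
      rw [hbwt_zero j h0] at hb
      rw [hb] at hc
      exact lt_irrefl c hc
    exact ⟨h1, by rw [← hbwt_pos j hj h1]; exact hb⟩
  -- the LF-mapping formula
  have hLF : ∀ j k0, j < T.length → k0 < T.length → bwt T SA j = c → SA k0 + 1 = SA j →
      k0 = cnt T c + rankBWT T SA c j := by
    intro j k0 hj hk0 hb hrel
    obtain ⟨h1, hTc⟩ := hpos j hj hb
    have hSAj := hSA j hj
    have hSAk0 := hSA k0 hk0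
    have hsk0 : T.drop (SA k0) = c :: T.drop (SA j) := by
      rw [drop_cons' T hSAk0, hrel]
      congr 1
      have he : SA k0 = SA j - 1 := by omega
      rw [he]
      exact hTc
    have hcard : ((Finset.range T.length).filter (fun k' => k' < k0)).card = k0 := by
      have he : (Finset.range T.length).filter (fun k' => k' < k0) = Finset.range k0 := by
        ext x
        simp only [Finset.mem_filter, Finset.mem_range]
        omega
      rw [he, Finset.card_range]
    have hsplit : (Finset.range T.length).filter (fun k' => k' < k0)
        = ((Finset.range T.length).filter (fun k' => T[SA k']! < c)) ∪
          ((Finset.range T.length).filter (fun k' => T[SA k']! = c ∧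
             List.Lex (· < ·) (T.drop (SA k' + 1)) (T.drop (SA j)))) := by
      rw [← Finset.filter_or]
      apply Finset.filter_congr
      intro x hx
      rw [Finset.mem_range] at hx
      rw [← hord x k0 hx hk0, hsk0, drop_cons' T (hSA x hx)]
      exact lex_cons_iff'
    have hdisj : Disjoint
        ((Finset.range T.length).filter (fun k' => T[SA k']! < c))
        ((Finset.range T.length).filter (fun k' => T[SA k']! = c ∧
             List.Lex (· < ·) (T.drop (SA k' + 1)) (T.drop (SA j)))) := by
      rw [Finset.disjoint_left]
      intro a ha hb'
      rw [Finset.mem_filter] at ha hb'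
      rw [hb'.2.1] at ha
      exact lt_irrefl c ha.2
    have hbij1 : ((Finset.range T.length).filter (fun k' => T[SA k']! < c)).card = cnt T c := by
      unfold cnt
      apply Finset.card_bij (i := fun k' _ => SA k')
      · intro a ha
        rw [Finset.mem_filter, Finset.mem_range] at ha
        exact Finset.mem_filter.2 ⟨Finset.mem_range.2 (hSA a ha.1), ha.2⟩
      · intro a ha b hb' h
        rw [Finset.mem_filter, Finset.mem_range] at ha hb'
        exact hinj a b ha.1 hb'.1 h
      · intro p hp
        rw [Finset.mem_filter, Finset.mem_range] at hp
        obtain ⟨hk', he⟩ := hσ p hp.1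
        refine ⟨σ p, Finset.mem_filter.2 ⟨Finset.mem_range.2 hk', ?_⟩, he⟩
        rw [he]
        exact hp.2
    have hbij2 : ((Finset.range T.length).filter (fun k' => T[SA k']! = c ∧
             List.Lex (· < ·) (T.drop (SA k' + 1)) (T.drop (SA j)))).card
        = rankBWT T SA c j := by
      unfold rankBWT
      apply Finset.card_bij (i := fun k' _ => σ (SA k' + 1))
      · intro a ha
        rw [Finset.mem_filter, Finset.mem_range] at ha
        obtain ⟨han, hac, halex⟩ := ha
        have hane : SA a ≠ T.length - 1 := by
          intro hE
          rw [hE] at hac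
          rw [hac] at hc
          exact lt_irrefl c hc
        have hSAa := hSA a han
        have hlt : SA a + 1 < T.length := by omega
        obtain ⟨hjn, hje⟩ := hσ (SA a + 1) hlt
        refine Finset.mem_filter.2 ⟨Finset.mem_range.2 ?_, ?_⟩
        · rw [← hje] at halex
          exact (hord _ j hjn hj).1 halex
        · rw [hbwt_pos _ hjn (by omega), hje]
          simpa using hac
      · intro a ha b hb' h
        rw [Finset.mem_filter, Finset.mem_range] at ha hb'
        have hane : SA a ≠ T.length - 1 := by
          intro hE; rw [hE] at ha; rw [ha.2.1] at hc; exact lt_irrefl c hc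
        have hbne : SA b ≠ T.length - 1 := by
          intro hE; rw [hE] at hb'; rw [hb'.2.1] at hc; exact lt_irrefl c hc
        have hSAa := hSA a ha.1
        have hSAb := hSA b hb'.1
        obtain ⟨_, hea⟩ := hσ (SA a + 1) (by omega)
        obtain ⟨_, heb⟩ := hσ (SA b + 1) (by omega)
        have : SA a + 1 = SA b + 1 := by rw [← hea, ← heb, h]
        exact hinj a b ha.1 hb'.1 (by omega)
      · intro j' hj'
        rw [Finset.mem_filter, Finset.mem_range] at hj'
        have hj'n : j' < T.length := lt_trans hj'.1 hj
        obtain ⟨h1', hTc'⟩ := hpos j' hj'n hj'.2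
        have hSAj' := hSA j' hj'n
        obtain ⟨hkn, hke⟩ := hσ (SA j' - 1) (by omega)
        refine ⟨σ (SA j' - 1), Finset.mem_filter.2 ⟨Finset.mem_range.2 hkn, ?_, ?_⟩, ?_⟩
        · rw [hke]; exact hTc'
        · have he2 : SA (σ (SA j' - 1)) + 1 = SA j' := by omega
          rw [he2, hord j' j hj'n hj]
          exact hj'.1
        · have he2 : SA (σ (SA j' - 1)) + 1 = SA j' := by omega
          rw [he2]
          obtain ⟨hkn2, hke2⟩ := hσ (SA j') hSAj'
          exact hinj _ _ hkn2 hj'n hke2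
    rw [← hcard, hsplit, Finset.card_union_of_disjoint hdisj, hbij1, hbij2]
  -- cnt is at least 1 (the sentinel is smaller than c)
  have hcnt1 : 1 ≤ cnt T c := by
    rw [← Finset.card_singleton (T.length - 1)]
    apply Finset.card_le_card
    intro x hx
    rw [Finset.mem_singleton] at hx
    subst hx
    exact Finset.mem_filter.2 ⟨Finset.mem_range.2 (by omega), hc⟩
  -- main argument
  intro k hk
  have hSAk := hSA k hk
  constructor
  · intro hpre
    rw [drop_cons' T hSAk, List.cons_prefix_cons] at hpre
    obtain ⟨hcc, hWpre⟩ := hpre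
    have hkne : SA k ≠ T.length - 1 := by
      intro hE
      rw [hE] at hcc
      rw [← hcc] at hc
      exact lt_irrefl c hc
    have hlt : SA k + 1 < T.length := by omega
    obtain ⟨hjn, hje⟩ := hσ (SA k + 1) hlt
    set j := σ (SA k + 1) with hjdef
    have hWj : W <+: T.drop (SA j) := by rw [hje]; exact hWpre
    obtain ⟨hlj, hjr⟩ := (hW j hjn).1 hWj
    have hbj : bwt T SA j = c := by
      rw [hbwt_pos j hjn (by omega), hje]
      simpa using hcc.symm
    have hkval : k = cnt T c + rankBWT T SA c j := hLF j k hjn hk hbj (by omega)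
    have hm1 : rankBWT T SA c l ≤ rankBWT T SA c j :=
      count_mono _ hlj
    have hstep : rankBWT T SA c (j + 1) = rankBWT T SA c j + 1 :=
      count_step (fun j' => bwt T SA j' = c) j hbj
    have hm2 : rankBWT T SA c (j + 1) ≤ rankBWT T SA c (r + 1) :=
      count_mono _ (by omega)
    omega
  · rintro ⟨h1, h2⟩
    have hRr1 : 1 ≤ rankBWT T SA c (r + 1) := by
      by_contra h
      omega
    set m := k - cnt T c with hmdef
    have hmlt : m < rankBWT T SA c (r + 1) := by omega
    obtain ⟨j, hjlt, hbj, hrankj⟩ := count_exists (fun j' => bwt T SA j' = c) (r + 1) m hmlt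
    have hrankj' : rankBWT T SA c j = m := hrankj
    have hjn : j < T.length := by omega
    have hlj : l ≤ j := by
      by_contra h
      push_neg at h
      have hs : rankBWT T SA c (j + 1) ≤ rankBWT T SA c l := count_mono _ (by omega)
      have hstep : rankBWT T SA c (j + 1) = rankBWT T SA c j + 1 :=
        count_step (fun j' => bwt T SA j' = c) j hbj
      omega
    obtain ⟨h1', hTc'⟩ := hpos j hjn hbj
    have hSAj := hSA j hjn
    obtain ⟨hk0n, hk0e⟩ := hσ (SA j - 1) (by omega)
    have hk0val : σ (SA j - 1) = cnt T c + rankBWT T SA c j :=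
      hLF j _ hjn hk0n hbj (by omega)
    have hkk0 : σ (SA j - 1) = k := by omega
    have hSAke : SA k = SA j - 1 := by rw [← hkk0]; exact hk0e
    rw [drop_cons' T hSAk, List.cons_prefix_cons]
    constructor
    · rw [hSAke]
      exact hTc'.symm
    · have he2 : SA k + 1 = SA j := by omega
      rw [he2]
      exact (hW j hjn).2 ⟨hlj, hjlt |> fun h => by omega⟩
end
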